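/- Let m ≥ 1 and 0 ≤ l, l' ≤ m be integers with l' ≠ l and l' ≠ m − l. Then there exists a constant C < 1 such that for every z, w ∈ ℂ with |z|² + |w|² = 1, writing (zζ+wω)^l·(−conj(w)ζ+conj(z)ω)^{m−l} = Σ_{p=0}^{m} a_p · ζ^p ω^{m−p} as a homogeneous polynomial in (ζ,ω), one has √(l'!·(m−l')!/(l!·(m−l)!)) · |a_{l'}| ≤ C. -/

import Mathlib

open Polynomial Finset Complex

noncomputable def rr (m l p : ℕ) (a b c d : ℂ) : ℂ :=
  ∑ j ∈ Finset.range (p+1), (l.choose j : ℂ) * ((m-l).choose (p-j) : ℂ) *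
    a^j * b^(l-j) * c^(p-j) * d^((m-l)-(p-j))

lemma coeff_linear_pow (a b : ℂ) (n k : ℕ) :
    ((C a * X + C b) ^ n).coeff k = (n.choose k : ℂ) * a ^ k * b ^ (n - k) := by
  rw [add_pow]
  rw [Polynomial.finset_sum_coeff]
  have : ∀ i ∈ Finset.range (n+1),
      ((C a * X) ^ i * C b ^ (n - i) * (n.choose i : Polynomial ℂ)).coeff k
        = if i = k then (n.choose i : ℂ) * a ^ i * b ^ (n - i) else 0 := by
    intro i _
    have : (C a * X) ^ i * C b ^ (n - i) * (n.choose i : Polynomial ℂ)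
        = C ((n.choose i : ℂ) * a ^ i * b ^ (n - i)) * X ^ i := by
      push_cast
      rw [mul_pow, ← C_pow, ← C_pow]
      simp only [C_mul, C_pow, Polynomial.C_eq_natCast]
      ring
    rw [this, Polynomial.coeff_C_mul, Polynomial.coeff_X_pow]
    by_cases h : k = i <;> simp [h, eq_comm]
  rw [Finset.sum_congr rfl this]
  rw [Finset.sum_ite_eq' (Finset.range (n+1)) k]
  by_cases hk : k ∈ Finset.range (n+1)
  · simp [hk]
  · simp only [hk, if_false]
    simp only [Finset.mem_range, not_lt] at hk
    rw [Nat.choose_eq_zero_of_lt (by omega)]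
    simp

lemma coeff_prod_pow (m l : ℕ) (a b c d : ℂ) (p : ℕ) :
    ((C a * X + C b) ^ l * (C c * X + C d) ^ (m - l)).coeff p = rr m l p a b c d := by
  rw [Polynomial.coeff_mul, Finset.Nat.sum_antidiagonal_eq_sum_range_succ_mk]
  unfold rr
  refine Finset.sum_congr rfl fun j _ => ?_
  rw [coeff_linear_pow, coeff_linear_pow]
  ring

lemma natDegree_le_m (m l : ℕ) (hl : l ≤ m) (a b c d : ℂ) :
    ((C a * X + C b) ^ l * (C c * X + C d) ^ (m - l)).natDegree < m + 1 := by
  have h1 : (C a * X + C b).natDegree ≤ 1 := by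
    apply le_trans (Polynomial.natDegree_add_le _ _)
    simp [Polynomial.natDegree_C_mul_le]
    exact le_trans (Polynomial.natDegree_C_mul_le _ _) (by simp)
  have h2 : (C c * X + C d).natDegree ≤ 1 := by
    apply le_trans (Polynomial.natDegree_add_le _ _)
    simp
    exact le_trans (Polynomial.natDegree_C_mul_le _ _) (by simp)
  have := Polynomial.natDegree_mul_le (p := (C a * X + C b) ^ l) (q := (C c * X + C d) ^ (m - l))
  have p1 := Polynomial.natDegree_pow_le (p := C a * X + C b) (n := l)
  have p2 := Polynomial.natDegree_pow_le (p := C c * X + C d) (n := m - l)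
  have q1 : ((C a * X + C b) ^ l).natDegree ≤ l := le_trans p1 (by
    calc l * (C a * X + C b).natDegree ≤ l * 1 := Nat.mul_le_mul_left l h1
    _ = l := Nat.mul_one l)
  have q2 : ((C c * X + C d) ^ (m-l)).natDegree ≤ m - l := le_trans p2 (by
    calc (m-l) * (C c * X + C d).natDegree ≤ (m-l) * 1 := Nat.mul_le_mul_left (m-l) h2
    _ = m - l := Nat.mul_one _)
  omega

/-- two-variable expansion -/

lemma expand2 (m l : ℕ) (hl : l ≤ m) (a b c d u v : ℂ) :
    (a*u + b*v) ^ l * (c*u + d*v) ^ (m - l)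
      = ∑ p ∈ Finset.range (m+1), rr m l p a b c d * u ^ p * v ^ (m - p) := by
  -- scaling lemma: rr m l p a (b*v) c (d*v) = v^(m-p) * rr m l p a b c d for p ≤ m
  by_cases hv : v = 0
  · subst hv
    simp only [mul_zero, add_zero]
    rw [Finset.sum_eq_single m]
    · rw [Nat.sub_self, pow_zero, mul_one]
      have : rr m l m a b c d = a ^ l * c ^ (m - l) := by
        unfold rr
        rw [Finset.sum_eq_single l]
        · simp [Nat.sub_self]
        · intro j hj hne
          rcases lt_or_gt_of_ne hne with h | h
          · have : m - j > m - l := by omega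
            rw [Nat.choose_eq_zero_of_lt this]
            ring
          · rw [Nat.choose_eq_zero_of_lt h]
            ring
        · intro h
          exact absurd (Finset.mem_range.2 (by omega)) h
      rw [this]
      have : (a * u) ^ l * (c * u) ^ (m - l) = a ^ l * c ^ (m-l) * (u^l * u^(m-l)) := by ring
      rw [this, ← pow_add]
      congr 2
      omega
    · intro p hp hne
      have : m - p ≠ 0 := by simp at hp; omega
      rw [zero_pow this]; ring
    · intro h; exact absurd (Finset.mem_range.2 (by omega)) h
  · -- v ≠ 0
    have key : ∀ x : ℂ, (a*x + b) ^ l * (c*x + d) ^ (m-l)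
        = ∑ p ∈ Finset.range (m+1), rr m l p a b c d * x ^ p := by
      intro x
      have := Polynomial.eval_eq_sum_range' (natDegree_le_m m l hl a b c d) x
      simp only [Polynomial.eval_mul, Polynomial.eval_pow, Polynomial.eval_add,
        Polynomial.eval_C, Polynomial.eval_X, coeff_prod_pow] at this
      convert this using 2 <;> ring
    have hx := key (u / v)
    have e1 : a * (u/v) + b = (a*u + b*v)/v := by field_simp
    have e2 : c * (u/v) + d = (c*u + d*v)/v := by field_simp
    rw [e1, e2, div_pow, div_pow, div_mul_div_comm, ← pow_add] at hx
    have hlm : l + (m - l) = m := by omega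
    rw [hlm] at hx
    have hmain : (a*u + b*v) ^ l * (c*u + d*v) ^ (m - l)
        = (∑ p ∈ Finset.range (m+1), rr m l p a b c d * (u/v) ^ p) * v ^ m := by
      rw [← hx]
      field_simp
    rw [hmain, Finset.sum_mul]
    refine Finset.sum_congr rfl fun p hp => ?_
    have hpm : p ≤ m := by simp at hp; omega
    have : (v:ℂ)^m = v^p * v^(m-p) := by rw [← pow_add]; congr 1; omega
    rw [this, div_pow]
    field_simp

lemma coeff_unique (n : ℕ) (c c' : ℕ → ℂ)
    (h : ∀ x : ℂ, ∑ p ∈ Finset.range n, c p * x ^ p = ∑ p ∈ Finset.range n, c' p * x ^ p)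
    (p : ℕ) (hp : p ∈ Finset.range n) : c p = c' p := by
  have : (∑ q ∈ Finset.range n, C (c q) * X ^ q) = ∑ q ∈ Finset.range n, C (c' q) * X ^ q := by
    apply Polynomial.funext
    intro x
    simp only [Polynomial.eval_finset_sum, Polynomial.eval_mul, Polynomial.eval_pow,
      Polynomial.eval_C, Polynomial.eval_X]
    exact h x
  have hc := congrArg (fun P => Polynomial.coeff P p) this
  simp only [Polynomial.finset_sum_coeff, Polynomial.coeff_C_mul, Polynomial.coeff_X_pow,
    mul_ite, mul_one, mul_zero] at hc
  rwa [Finset.sum_ite_eq (Finset.range n) p, Finset.sum_ite_eq (Finset.range n) p,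
    if_pos hp, if_pos hp] at hc

/-- composition -/

lemma comp_rr (m l : ℕ) (hl : l ≤ m) (a b c d e f g h : ℂ) (p : ℕ)
    (hp : p ∈ Finset.range (m+1)) :
    ∑ q ∈ Finset.range (m+1), rr m l q a b c d * rr m q p e f g h
      = rr m l p (a*e+b*g) (a*f+b*h) (c*e+d*g) (c*f+d*h) := by
  apply coeff_unique (m+1) _ _ _ p hp
  intro x
  have rhs : ∑ p ∈ Finset.range (m+1),
      rr m l p (a*e+b*g) (a*f+b*h) (c*e+d*g) (c*f+d*h) * x ^ p
      = ((a*e+b*g)*x + (a*f+b*h)*1) ^ l * ((c*e+d*g)*x + (c*f+d*h)*1) ^ (m-l) := by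
    rw [expand2 m l hl _ _ _ _ x 1]
    exact Finset.sum_congr rfl fun q _ => by simp
  rw [rhs]
  have lhs1 : ((a*e+b*g)*x + (a*f+b*h)*1) ^ l * ((c*e+d*g)*x + (c*f+d*h)*1) ^ (m-l)
      = (a*(e*x+f*1) + b*(g*x+h*1)) ^ l * (c*(e*x+f*1) + d*(g*x+h*1)) ^ (m-l) := by
    ring_nf
  rw [lhs1, expand2 m l hl a b c d (e*x+f*1) (g*x+h*1)]
  have rexp : ∀ q ∈ Finset.range (m+1),
      rr m l q a b c d * (e*x+f*1) ^ q * (g*x+h*1) ^ (m-q)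
        = ∑ p' ∈ Finset.range (m+1), rr m l q a b c d * rr m q p' e f g h * x ^ p' := by
    intro q hq
    rw [mul_assoc, expand2 m q (by simp at hq; omega) e f g h x 1, Finset.mul_sum]
    refine Finset.sum_congr rfl fun p' _ => ?_
    simp only [one_pow, mul_one]
    ring
  rw [Finset.sum_congr rfl rexp, Finset.sum_comm]
  refine Finset.sum_congr rfl fun p' _ => ?_
  rw [Finset.sum_mul]

lemma rr_id (m l p : ℕ) (hl : l ≤ m) :
    rr m l p 1 0 0 1 = if p = l then 1 else 0 := by
  unfold rr
  by_cases hpl : p = l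
  · subst hpl
    rw [Finset.sum_eq_single p]
    · simp
    · intro j hj hne
      simp only [Finset.mem_range] at hj
      have hjp : j < p := by omega
      rw [zero_pow (by omega : p - j ≠ 0)]
      ring
    · intro hc; exact absurd (Finset.mem_range.2 (by omega)) hc
  · rw [if_neg hpl, Finset.sum_eq_zero]
    intro j hj
    simp only [Finset.mem_range] at hj
    by_cases hjl : j = l
    · subst hjl
      rw [zero_pow (by omega : p - j ≠ 0)]
      ring
    · by_cases hjl2 : j < l
      · rw [zero_pow (by omega : l - j ≠ 0)]
        ring
      · rw [Nat.choose_eq_zero_of_lt (by omega)]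
        simp

lemma fact_binom_symm (m q l' k : ℕ) (hq : q ≤ m) (hl' : l' ≤ m)
    (hkq : k ≤ q) (hkl : k ≤ l') (h : l' - k ≤ m - q) :
    (l'.factorial * (m-l').factorial * (q.choose k) * ((m-q).choose (l'-k)) : ℂ)
      = (q.factorial * (m-q).factorial * (l'.choose k) * ((m-l').choose (q-k)) : ℂ) := by
  have h2 : q - k ≤ m - l' := by omega
  have e1 : (m-q) - (l'-k) = (m-l') - (q-k) := by omega
  rw [Nat.cast_choose ℂ hkq, Nat.cast_choose ℂ h, Nat.cast_choose ℂ hkl, Nat.cast_choose ℂ h2, e1]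
  have n1 : (k.factorial : ℂ) ≠ 0 := Nat.cast_ne_zero.2 (Nat.factorial_ne_zero k)
  have n2 : ((q-k).factorial : ℂ) ≠ 0 := Nat.cast_ne_zero.2 (Nat.factorial_ne_zero _)
  have n3 : ((l'-k).factorial : ℂ) ≠ 0 := Nat.cast_ne_zero.2 (Nat.factorial_ne_zero _)
  have n4 : (((m-l') - (q-k)).factorial : ℂ) ≠ 0 := Nat.cast_ne_zero.2 (Nat.factorial_ne_zero _)
  field_simp

lemma rr_symm (m q l' : ℕ) (hq : q ≤ m) (hl' : l' ≤ m) (z w : ℂ) :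
    (l'.factorial * (m-l').factorial : ℂ) * rr m q l' (starRingEnd ℂ z) (-w) (starRingEnd ℂ w) z
      = (q.factorial * (m-q).factorial : ℂ) *
        starRingEnd ℂ (rr m l' q z w (-(starRingEnd ℂ w)) (starRingEnd ℂ z)) := by
  unfold rr
  rw [map_sum, Finset.mul_sum, Finset.mul_sum]
  set lo := min l' q with hlo
  have hsub1 : Finset.range (lo+1) ⊆ Finset.range (l'+1) := by
    apply Finset.range_subset_range.2; omega
  have hsub2 : Finset.range (lo+1) ⊆ Finset.range (q+1) := by
    apply Finset.range_subset_range.2; omega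
  rw [← Finset.sum_subset hsub1, ← Finset.sum_subset hsub2]
  · refine Finset.sum_congr rfl fun k hk => ?_
    simp only [Finset.mem_range] at hk
    have hkq : k ≤ q := by omega
    have hkl : k ≤ l' := by omega
    by_cases h : l' - k ≤ m - q
    · have h2 : q - k ≤ m - l' := by omega
      have e1 : (m-q) - (l'-k) = (m-l') - (q-k) := by omega
      have key := fact_binom_symm m q l' k hq hl' hkq hkl h
      simp only [map_mul, map_pow, map_natCast, map_neg, Complex.conj_conj]
      rw [e1]
      calc (l'.factorial * (m-l').factorial : ℂ) *
            ((q.choose k : ℂ) * ((m-q).choose (l'-k) : ℂ) * (starRingEnd ℂ z)^k * (-w)^(q-k)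
              * (starRingEnd ℂ w)^(l'-k) * z^((m-l')-(q-k)))
          = ((l'.factorial * (m-l').factorial * (q.choose k) * ((m-q).choose (l'-k)) : ℂ))
            * ((starRingEnd ℂ z)^k * (-w)^(q-k) * (starRingEnd ℂ w)^(l'-k) * z^((m-l')-(q-k))) := by
            push_cast; ring
        _ = ((q.factorial * (m-q).factorial * (l'.choose k) * ((m-l').choose (q-k)) : ℂ))
            * ((starRingEnd ℂ z)^k * (-w)^(q-k) * (starRingEnd ℂ w)^(l'-k) * z^((m-l')-(q-k))) := by
            rw [key]
        _ = (q.factorial * (m-q).factorial : ℂ) *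
            ((l'.choose k : ℂ) * ((m-l').choose (q-k) : ℂ) * (starRingEnd ℂ z)^k
              * (starRingEnd ℂ w)^(l'-k) * (-w)^(q-k) * z^((m-l')-(q-k))) := by
            push_cast; ring
    · have hz1 : (m-q).choose (l'-k) = 0 := Nat.choose_eq_zero_of_lt (by omega)
      have hz2 : (m-l').choose (q-k) = 0 := Nat.choose_eq_zero_of_lt (by omega)
      rw [hz1, hz2]
      simp
  · -- terms k ∈ range(q+1) \ range(lo+1) of LHS vanish: k > lo means k > l' (since k ≤ q)
    intro k hk hk'
    simp only [Finset.mem_range] at hk hk'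
    have : l' < k := by omega
    rw [Nat.choose_eq_zero_of_lt this]
    simp
  · -- terms j ∈ range(l'+1) \ range(lo+1) of RHS vanish: j > q
    intro k hk hk'
    simp only [Finset.mem_range] at hk hk'
    have : q < k := by omega
    rw [Nat.choose_eq_zero_of_lt this]
    simp

lemma parseval (m l : ℕ) (hl : l ≤ m) (z w : ℂ)
    (hzw : z * starRingEnd ℂ z + w * starRingEnd ℂ w = 1) :
    ∑ q ∈ Finset.range (m+1), (q.factorial * (m-q).factorial : ℝ) *
        ‖rr m l q z w (-(starRingEnd ℂ w)) (starRingEnd ℂ z)‖ ^ 2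
      = (l.factorial * (m-l).factorial : ℝ) := by
  have hcomp := comp_rr m l hl z w (-(starRingEnd ℂ w)) (starRingEnd ℂ z)
    (starRingEnd ℂ z) (-w) (starRingEnd ℂ w) z l (Finset.mem_range.2 (by omega))
  have e1 : z * starRingEnd ℂ z + w * starRingEnd ℂ w = 1 := hzw
  have e2 : z * -w + w * z = 0 := by ring
  have e3 : -(starRingEnd ℂ w) * starRingEnd ℂ z + starRingEnd ℂ z * starRingEnd ℂ w = 0 := by ring
  have e4 : -(starRingEnd ℂ w) * -w + starRingEnd ℂ z * z
      = z * starRingEnd ℂ z + w * starRingEnd ℂ w := by ring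
  rw [e1, e2, e3, e4, e1, rr_id m l l hl, if_pos rfl] at hcomp
  -- multiply by l!(m-l)!
  have key : (l.factorial * (m-l).factorial : ℂ)
      = ∑ q ∈ Finset.range (m+1), (q.factorial * (m-q).factorial : ℂ) *
          (Complex.normSq (rr m l q z w (-(starRingEnd ℂ w)) (starRingEnd ℂ z)) : ℂ) := by
    calc (l.factorial * (m-l).factorial : ℂ)
        = (l.factorial * (m-l).factorial : ℂ) *
          ∑ q ∈ Finset.range (m+1), rr m l q z w (-(starRingEnd ℂ w)) (starRingEnd ℂ z) *
            rr m q l (starRingEnd ℂ z) (-w) (starRingEnd ℂ w) z := by rw [hcomp, mul_one]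
      _ = ∑ q ∈ Finset.range (m+1), rr m l q z w (-(starRingEnd ℂ w)) (starRingEnd ℂ z) *
            ((l.factorial * (m-l).factorial : ℂ) *
              rr m q l (starRingEnd ℂ z) (-w) (starRingEnd ℂ w) z) := by
          rw [Finset.mul_sum]; exact Finset.sum_congr rfl fun q _ => by ring
      _ = ∑ q ∈ Finset.range (m+1), rr m l q z w (-(starRingEnd ℂ w)) (starRingEnd ℂ z) *
            ((q.factorial * (m-q).factorial : ℂ) *
              starRingEnd ℂ (rr m l q z w (-(starRingEnd ℂ w)) (starRingEnd ℂ z))) := by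
          refine Finset.sum_congr rfl fun q hq => ?_
          rw [rr_symm m q l (by simp at hq; omega) hl z w]
      _ = ∑ q ∈ Finset.range (m+1), (q.factorial * (m-q).factorial : ℂ) *
            (Complex.normSq (rr m l q z w (-(starRingEnd ℂ w)) (starRingEnd ℂ z)) : ℂ) := by
          refine Finset.sum_congr rfl fun q _ => ?_
          rw [← Complex.mul_conj]
          ring
  apply Complex.ofReal_injective
  push_cast
  rw [key]
  refine Finset.sum_congr rfl fun q _ => ?_
  rw [← Complex.ofReal_pow, Complex.sq_norm]

lemma rr_top (m l : ℕ) (hl : l ≤ m) (a b c d : ℂ) :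
    rr m l m a b c d = a ^ l * c ^ (m - l) := by
  unfold rr
  rw [Finset.sum_eq_single l]
  · simp [Nat.sub_self]
  · intro j hj hne
    rcases lt_or_gt_of_ne hne with h | h
    · rw [Nat.choose_eq_zero_of_lt (show m - l < m - j by omega)]
      ring
    · rw [Nat.choose_eq_zero_of_lt h]
      ring
  · intro h
    exact absurd (Finset.mem_range.2 (by omega)) h

lemma rr_bot (m l : ℕ) (a b c d : ℂ) :
    rr m l 0 a b c d = b ^ l * d ^ (m - l) := by
  unfold rr
  simp

lemma pointwise (m l l' : ℕ) (hm : 1 ≤ m) (hl : l ≤ m) (hl' : l' ≤ m)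
    (h1 : l' ≠ l) (h2 : l' ≠ m - l) (z w : ℂ)
    (hzw : z * starRingEnd ℂ z + w * starRingEnd ℂ w = 1) :
    (l'.factorial * (m-l').factorial : ℝ) *
        ‖rr m l l' z w (-(starRingEnd ℂ w)) (starRingEnd ℂ z)‖ ^ 2
      < (l.factorial * (m-l).factorial : ℝ) := by
  have hfacpos : (0:ℝ) < (l.factorial * (m-l).factorial : ℝ) := by
    positivity
  by_cases hw : w = 0
  · have hz0 : rr m l l' z w (-(starRingEnd ℂ w)) (starRingEnd ℂ z) = 0 := by
      subst hw
      unfold rr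
      apply Finset.sum_eq_zero
      intro j hj
      simp only [Finset.mem_range] at hj
      simp only [map_zero, neg_zero]
      by_cases hjl' : j = l'
      · subst hjl'
        by_cases hjl : j < l
        · rw [zero_pow (show l - j ≠ 0 by omega)]; ring
        · rw [Nat.choose_eq_zero_of_lt (show l < j by omega)]; simp
      · rw [zero_pow (show l' - j ≠ 0 by omega)]; ring
    rw [hz0]
    simpa using hfacpos
  · by_cases hz : z = 0
    · have hz0 : rr m l l' z w (-(starRingEnd ℂ w)) (starRingEnd ℂ z) = 0 := by
        subst hz
        unfold rr
        apply Finset.sum_eq_zero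
        intro j hj
        simp only [Finset.mem_range] at hj
        simp only [map_zero]
        by_cases hj0 : j = 0
        · subst hj0
          rcases lt_trichotomy l' (m - l) with h | h | h
          · rw [zero_pow (show (m-l) - (l'-0) ≠ 0 by omega)]; ring
          · exact absurd h h2
          · rw [Nat.choose_eq_zero_of_lt (show m - l < l' - 0 by omega)]; simp
        · rw [zero_pow hj0]; ring
      rw [hz0]
      simpa using hfacpos
    · -- z ≠ 0 and w ≠ 0
      set T : ℕ → ℝ := fun q => (q.factorial * (m-q).factorial : ℝ) *
        ‖rr m l q z w (-(starRingEnd ℂ w)) (starRingEnd ℂ z)‖ ^ 2 with hT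
      have hTnn : ∀ q, 0 ≤ T q := fun q => by positivity
      set q0 : ℕ := if l' = m then 0 else m with hq0
      have hq0ne : q0 ≠ l' := by
        by_cases h : l' = m <;> simp [hq0, h] <;> omega
      have hq0mem : q0 ∈ Finset.range (m+1) := by
        by_cases h : l' = m <;> simp [hq0, h] <;> omega
      have hTq0 : 0 < T q0 := by
        have hconjw : starRingEnd ℂ w ≠ 0 := by simpa using hw
        have hconjz : starRingEnd ℂ z ≠ 0 := by simpa using hz
        have : rr m l q0 z w (-(starRingEnd ℂ w)) (starRingEnd ℂ z) ≠ 0 := by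
          by_cases h : l' = m
          · rw [show q0 = 0 by simp [hq0, h], rr_bot]
            exact mul_ne_zero (pow_ne_zero _ hw) (pow_ne_zero _ hconjz)
          · rw [show q0 = m by simp [hq0, h], rr_top m l hl]
            exact mul_ne_zero (pow_ne_zero _ hz) (pow_ne_zero _ (neg_ne_zero.2 hconjw))
        have := norm_pos_iff.mpr this
        simp only [hT]
        positivity
      have hsum := parseval m l hl z w hzw
      have hpair : T l' + T q0 ≤ ∑ q ∈ Finset.range (m+1), T q := by
        have : ({l', q0} : Finset ℕ) ⊆ Finset.range (m+1) := by
          intro x hx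
          simp only [Finset.mem_insert, Finset.mem_singleton] at hx
          rcases hx with rfl | rfl
          · exact Finset.mem_range.2 (by omega)
          · exact hq0mem
        calc T l' + T q0 = ∑ q ∈ ({l', q0} : Finset ℕ), T q := by
              rw [Finset.sum_pair (Ne.symm hq0ne)]
          _ ≤ ∑ q ∈ Finset.range (m+1), T q :=
              Finset.sum_le_sum_of_subset_of_nonneg this (fun q _ _ => hTnn q)
      have : T l' + T q0 ≤ (l.factorial * (m-l).factorial : ℝ) := by
        rw [← hsum]; exact hpair
      calc (l'.factorial * (m-l').factorial : ℝ) *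
            ‖rr m l l' z w (-(starRingEnd ℂ w)) (starRingEnd ℂ z)‖ ^ 2
          = T l' := rfl
        _ < T l' + T q0 := by linarith
        _ ≤ _ := this

/-- For `1 ≤ m`, `l ≤ m`, `l' ≤ m` with `l' ≠ l` and `l' ≠ m - l`, there is a
constant `C < 1` bounding, uniformly over `{z,w} ∈ SU(2)`, the normalized coefficient of
`ζ^{l'} ω^{m-l'}` in the expansion of `(zζ+wω)^l (−conj(w)ζ+conj(z)ω)^{m−l}`. -/
theorem stmt0 (m l l' : ℕ) (hm : 1 ≤ m) (hl : l ≤ m) (hl' : l' ≤ m)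
    (h1 : l' ≠ l) (h2 : l' ≠ m - l) :
    ∃ C : ℝ, C < 1 ∧
      ∀ z w : ℂ, ‖z‖ ^ 2 + ‖w‖ ^ 2 = 1 →
        ∀ a : ℕ → ℂ,
          (∀ ζ ω : ℂ,
              (z * ζ + w * ω) ^ l *
                  (-(starRingEnd ℂ w) * ζ + (starRingEnd ℂ z) * ω) ^ (m - l) =
                ∑ p ∈ Finset.range (m + 1), a p * ζ ^ p * ω ^ (m - p)) →
          Real.sqrt ((l'.factorial * (m - l').factorial : ℝ) /
              (l.factorial * (m - l).factorial)) * ‖a l'‖ ≤ C := by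
  set ratio : ℝ := (l'.factorial * (m - l').factorial : ℝ) /
      (l.factorial * (m - l).factorial) with hratio
  have hfacpos : (0:ℝ) < (l.factorial * (m-l).factorial : ℝ) := by positivity
  have hrnn : 0 ≤ ratio := by positivity
  set G : ℂ × ℂ → ℝ := fun x => Real.sqrt ratio *
      ‖rr m l l' x.1 x.2 (-(starRingEnd ℂ x.2)) (starRingEnd ℂ x.1)‖ with hG
  set S : Set (ℂ × ℂ) := {x | ‖x.1‖ ^ 2 + ‖x.2‖ ^ 2 = 1} with hS
  -- sphere condition translation
  have hsphere : ∀ x : ℂ × ℂ, x ∈ S →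
      x.1 * starRingEnd ℂ x.1 + x.2 * starRingEnd ℂ x.2 = 1 := by
    intro x hx
    simp only [hS, Set.mem_setOf_eq] at hx
    rw [Complex.mul_conj, Complex.mul_conj, ← Complex.ofReal_add, ← Complex.sq_norm,
      ← Complex.sq_norm, hx, Complex.ofReal_one]
  -- continuity
  have hcont : Continuous G := by
    apply Continuous.mul continuous_const
    apply continuous_norm.comp
    unfold rr
    apply continuous_finset_sum
    intro j _
    have c1 : Continuous fun x : ℂ × ℂ => starRingEnd ℂ x.1 := continuous_star.comp continuous_fst
    have c2 : Continuous fun x : ℂ × ℂ => starRingEnd ℂ x.2 := continuous_star.comp continuous_snd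
    exact ((((continuous_const.mul (continuous_fst.pow j)).mul
      (continuous_snd.pow (l-j))).mul ((c2.neg).pow (l'-j))).mul (c1.pow ((m-l)-(l'-j))))
  -- compactness
  have hclosed : IsClosed S := by
    apply isClosed_eq _ continuous_const
    exact ((continuous_norm.comp continuous_fst).pow 2).add
      ((continuous_norm.comp continuous_snd).pow 2)
  have hbdd : Bornology.IsBounded S := by
    apply Bornology.IsBounded.subset (Metric.isBounded_closedBall (x := (0 : ℂ × ℂ)) (r := 1))
    intro x hx
    simp only [hS, Set.mem_setOf_eq] at hx
    simp only [Metric.mem_closedBall, dist_zero_right, Prod.norm_def]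
    have h1 : ‖x.1‖ ≤ 1 := by nlinarith [norm_nonneg x.1, norm_nonneg x.2]
    have h2 : ‖x.2‖ ≤ 1 := by nlinarith [norm_nonneg x.1, norm_nonneg x.2]
    exact max_le h1 h2
  have hcompact : IsCompact S := Metric.isCompact_of_isClosed_isBounded hclosed hbdd
  have hne : S.Nonempty := ⟨(1, 0), by simp [hS]⟩
  obtain ⟨x0, hx0S, hmax⟩ := hcompact.exists_isMaxOn hne hcont.continuousOn
  refine ⟨G x0, ?_, ?_⟩
  · -- G x0 < 1
    have hpt := pointwise m l l' hm hl hl' h1 h2 x0.1 x0.2 (hsphere x0 hx0S)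
    have hsq : G x0 ^ 2 < 1 := by
      have : G x0 ^ 2 = ratio *
          ‖rr m l l' x0.1 x0.2 (-(starRingEnd ℂ x0.2)) (starRingEnd ℂ x0.1)‖ ^ 2 := by
        simp only [hG]
        rw [mul_pow, Real.sq_sqrt hrnn]
      rw [this, hratio, div_mul_eq_mul_div, div_lt_one hfacpos]
      exact hpt
    nlinarith [Real.sqrt_nonneg ratio, norm_nonneg
      (rr m l l' x0.1 x0.2 (-(starRingEnd ℂ x0.2)) (starRingEnd ℂ x0.1)), hsq]
  · intro z w hzw a ha
    -- identify a l' with rr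
    have hal : a l' = rr m l l' z w (-(starRingEnd ℂ w)) (starRingEnd ℂ z) := by
      apply coeff_unique (m+1) a _ _ l' (Finset.mem_range.2 (by omega))
      intro x
      have h1x := ha x 1
      rw [expand2 m l hl z w (-(starRingEnd ℂ w)) (starRingEnd ℂ z) x 1] at h1x
      rw [← Finset.sum_congr rfl (fun p _ => by rw [one_pow, mul_one] :
        ∀ p ∈ Finset.range (m+1), a p * x ^ p * (1:ℂ) ^ (m-p) = a p * x ^ p)]
      rw [← h1x]
      refine Finset.sum_congr rfl fun p _ => ?_
      rw [one_pow, mul_one]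
    rw [hal]
    have hmem : (z, w) ∈ S := by simp only [hS, Set.mem_setOf_eq]; exact hzw
    exact isMaxOn_iff.1 hmax (z, w) hmem
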